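/- Let n ≥ 3 be a natural number and let R > 0 and s > 0 be real numbers. Then ∫₀^R r^(n+1) cos(2 s r²) dr ≥ (Rⁿ/(4s)) · sin(2 s R²) + (n R^(n-2)/(16 s²)) · cos(2 s R²) - n R^(n-2)/(16 s²). -/

import Mathlib

/-- Explicit lower bound for the oscillatory integral, by double integration by parts. -/
theorem oscillatory_integral_lower_bound
    (n : ℕ) (hn : 3 ≤ n) (R s : ℝ) (hR : 0 < R) (hs : 0 < s) :
    ∫ r in (0 : ℝ)..R, r ^ (n + 1) * Real.cos (2 * s * r ^ 2) ≥
      (R ^ n / (4 * s)) * Real.sin (2 * s * R ^ 2) +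
        ((n : ℝ) * R ^ (n - 2) / (16 * s ^ 2)) * Real.cos (2 * s * R ^ 2) -
          (n : ℝ) * R ^ (n - 2) / (16 * s ^ 2) := by
  obtain ⟨m, rfl⟩ : ∃ m, n = m + 3 := ⟨n - 3, by omega⟩
  have hm2 : m + 3 - 2 = m + 1 := by omega
  rw [hm2]
  set c : ℝ := ((m : ℝ) + 3) * ((m : ℝ) + 1) / (16 * s ^ 2) with hc
  set F : ℝ → ℝ := fun x => x ^ (m + 3) * Real.sin (2 * s * x ^ 2) / (4 * s) +
      ((m : ℝ) + 3) * (x ^ (m + 1) * Real.cos (2 * s * x ^ 2)) / (16 * s ^ 2) with hF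
  have hderiv : ∀ r ∈ Set.uIcc (0 : ℝ) R,
      HasDerivAt F (r ^ (m + 4) * Real.cos (2 * s * r ^ 2) +
        c * (r ^ m * Real.cos (2 * s * r ^ 2))) r := by
    intro r _
    have hinner : HasDerivAt (fun x : ℝ => 2 * s * x ^ 2) (2 * s * (2 * r ^ 1)) r :=
      (hasDerivAt_pow 2 r).const_mul (2 * s)
    have hsin : HasDerivAt (fun x : ℝ => Real.sin (2 * s * x ^ 2))
        (Real.cos (2 * s * r ^ 2) * (2 * s * (2 * r ^ 1))) r :=
      (Real.hasDerivAt_sin _).comp r hinner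
    have hcos : HasDerivAt (fun x : ℝ => Real.cos (2 * s * x ^ 2))
        (-Real.sin (2 * s * r ^ 2) * (2 * s * (2 * r ^ 1))) r :=
      (Real.hasDerivAt_cos _).comp r hinner
    have h1 := ((hasDerivAt_pow (m + 3) r).mul hsin).div_const (4 * s)
    have h2 := ((((hasDerivAt_pow (m + 1) r).mul hcos).const_mul
        ((m : ℝ) + 3)).div_const (16 * s ^ 2))
    have := h1.add h2
    convert (show HasDerivAt F _ r from this) using 1
    have hs' : s ≠ 0 := ne_of_gt hs
    show r ^ (m + 4) * Real.cos (2 * s * r ^ 2) + c * (r ^ m * Real.cos (2 * s * r ^ 2)) = _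
    simp only [hc, Nat.add_sub_cancel, show m + 3 - 1 = m + 2 from rfl,
      show m + 1 - 1 = m from rfl, Nat.cast_add, Nat.cast_ofNat, Nat.cast_one, pow_one]
    push_cast
    field_simp
    ring
  have hint : ∫ r in (0:ℝ)..R, (r ^ (m + 4) * Real.cos (2 * s * r ^ 2) +
      c * (r ^ m * Real.cos (2 * s * r ^ 2))) = F R - F 0 := by
    apply intervalIntegral.integral_eq_sub_of_hasDerivAt hderiv
    apply Continuous.intervalIntegrable
    fun_prop
  have hF0 : F 0 = 0 := by simp [hF]
  have hi1 : IntervalIntegrable (fun r : ℝ => r ^ (m + 4) * Real.cos (2 * s * r ^ 2))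
      MeasureTheory.volume 0 R := by
    apply Continuous.intervalIntegrable; fun_prop
  have hi2 : IntervalIntegrable (fun r : ℝ => c * (r ^ m * Real.cos (2 * s * r ^ 2)))
      MeasureTheory.volume 0 R := by
    apply Continuous.intervalIntegrable; fun_prop
  rw [intervalIntegral.integral_add hi1 hi2, hF0, sub_zero] at hint
  have hsplit : ∫ r in (0:ℝ)..R, r ^ (m + 4) * Real.cos (2 * s * r ^ 2) =
      F R - c * ∫ r in (0:ℝ)..R, r ^ m * Real.cos (2 * s * r ^ 2) := by
    rw [intervalIntegral.integral_const_mul] at hint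
    linarith
  -- bound the remainder integral
  have hbound : ∫ r in (0:ℝ)..R, r ^ m * Real.cos (2 * s * r ^ 2) ≤
      R ^ (m + 1) / ((m : ℝ) + 1) := by
    have h1 : ∫ r in (0:ℝ)..R, r ^ m * Real.cos (2 * s * r ^ 2) ≤
        ∫ r in (0:ℝ)..R, r ^ m := by
      apply intervalIntegral.integral_mono_on hR.le
      · apply Continuous.intervalIntegrable; fun_prop
      · apply Continuous.intervalIntegrable; fun_prop
      · intro x hx
        have hx0 : 0 ≤ x ^ m := pow_nonneg hx.1 m
        calc x ^ m * Real.cos (2 * s * x ^ 2) ≤ x ^ m * 1 :=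
              mul_le_mul_of_nonneg_left (Real.cos_le_one _) hx0
          _ = x ^ m := mul_one _
    have h2 : ∫ r in (0:ℝ)..R, r ^ m = R ^ (m + 1) / ((m : ℝ) + 1) := by
      rw [integral_pow]; push_cast; ring
    linarith
  have hc0 : 0 ≤ c := by positivity
  have key : c * ∫ r in (0:ℝ)..R, r ^ m * Real.cos (2 * s * r ^ 2) ≤
      c * (R ^ (m + 1) / ((m : ℝ) + 1)) := mul_le_mul_of_nonneg_left hbound hc0
  have hceq : c * (R ^ (m + 1) / ((m : ℝ) + 1)) =
      ((m : ℝ) + 3) * R ^ (m + 1) / (16 * s ^ 2) := by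
    have : ((m : ℝ) + 1) ≠ 0 := by positivity
    rw [hc]
    field_simp
  rw [hsplit]
  have hFR : F R = R ^ (m + 3) * Real.sin (2 * s * R ^ 2) / (4 * s) +
      ((m : ℝ) + 3) * (R ^ (m + 1) * Real.cos (2 * s * R ^ 2)) / (16 * s ^ 2) := rfl
  rw [ge_iff_le, hFR]
  push_cast
  rw [hceq] at key
  have e1 : R ^ (m + 3) / (4 * s) * Real.sin (2 * s * R ^ 2) =
      R ^ (m + 3) * Real.sin (2 * s * R ^ 2) / (4 * s) := by ring
  have e2 : ((m : ℝ) + 3) * R ^ (m + 1) / (16 * s ^ 2) * Real.cos (2 * s * R ^ 2) =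
      ((m : ℝ) + 3) * (R ^ (m + 1) * Real.cos (2 * s * R ^ 2)) / (16 * s ^ 2) := by ring
  linarith [key]
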